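/- For m ≥ 2 and t ≥ 1, the distinguishing index of the generalized Mycielskian of the star satisfies Dist′(μ_t(K_{1,m})) ≤ r, where r is the minimum natural number such that r² ≥ m + 1. -/

import Mathlib

open SimpleGraph

universe u

/-- A distinguishing edge coloring: no nontrivial automorphism preserves the coloring. -/
def IsDistEdgeColoring {V : Type u} (G : SimpleGraph V) {C : Type*} (c : G.edgeSet → C) : Prop :=
  ∀ φ : G ≃g G, (∀ e : G.edgeSet, c (φ.mapEdgeSet e) = c e) → ∀ v, φ v = v

/-- The distinguishing index: least number of colors in a distinguishing edge coloring. -/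
noncomputable def distIndex {V : Type u} (G : SimpleGraph V) : ℕ :=
  sInf {k : ℕ | ∃ c : G.edgeSet → Fin k, IsDistEdgeColoring G c}

/-- The star `K_{1,m}` with center `0`. -/
def starGraph (m : ℕ) : SimpleGraph (Fin (m + 1)) :=
  SimpleGraph.fromRel fun a _ => a = 0

/-- The Mycielskian: `Sum.inl a` are original vertices, `Sum.inr (Sum.inl a)` their
shadows, and `Sum.inr (Sum.inr _)` the root. -/
def myc {V : Type u} (G : SimpleGraph V) : SimpleGraph (V ⊕ V ⊕ PUnit.{u+1}) :=
  SimpleGraph.fromRel fun x y =>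
    match x, y with
    | Sum.inl a, Sum.inl b => G.Adj a b
    | Sum.inl a, Sum.inr (Sum.inl b) => G.Adj a b
    | Sum.inr (Sum.inl _), Sum.inr (Sum.inr _) => True
    | _, _ => False

/-- The generalized Mycielskian with `t` extra levels: `Sum.inl (j, a)` is the level-`j`
copy of vertex `a` (level `0` being the original vertices), and `Sum.inr _` is the root. -/
def genMyc {V : Type u} (G : SimpleGraph V) (t : ℕ) :
    SimpleGraph ((Fin (t + 1) × V) ⊕ PUnit.{u+1}) :=
  SimpleGraph.fromRel fun x y =>
    match x, y with
    | Sum.inl (j, a), Sum.inl (k, b) =>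
        ((j.val = 0 ∧ k.val = 0) ∨ k.val = j.val + 1) ∧ G.Adj a b
    | Sum.inl (j, _), Sum.inr _ => j.val = t
    | _, _ => False

abbrev MV (m t : ℕ) := (Fin (t + 1) × Fin (m + 1)) ⊕ PUnit.{1}

/-- index of the color pair of a leaf at level `j` with index `i`. -/
def pIdx {m : ℕ} (t : ℕ) (j : Fin (t+1)) (i : Fin (m+1)) : ℕ :=
  if j.val = t then i.val else i.val - 1

/-- the color (as a natural number) of a prospective edge. -/
def colN {m t : ℕ} (r : ℕ) : MV m t → MV m t → ℕ
  | Sum.inl (j,i), Sum.inl (k,b) =>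
      if b = 0 then (if i = 0 then 0 else
        (if j.val < k.val then pIdx t j i / r else pIdx t j i % r))
      else (if i = 0 then
        (if k.val < j.val then pIdx t k b / r else pIdx t k b % r) else 0)
  | Sum.inl (j,i), Sum.inr _ => if i = 0 then 0 else pIdx t j i / r
  | Sum.inr _, Sum.inl (j,i) => if i = 0 then 0 else pIdx t j i / r
  | Sum.inr _, Sum.inr _ => 0

lemma colN_symm {m t : ℕ} (r : ℕ) (x y : MV m t) : colN r x y = colN r y x := by
  rcases x with ⟨j, i⟩ | u <;> rcases y with ⟨k, b⟩ | u'
  · simp only [colN]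
    by_cases hi : i = 0 <;> by_cases hb : b = 0 <;> simp [hi, hb]
  · rfl
  · rfl
  · rfl

lemma pIdx_le {m t : ℕ} (j : Fin (t+1)) (i : Fin (m+1)) : pIdx t j i ≤ m := by
  unfold pIdx; have := i.isLt; split <;> omega

lemma colN_lt {m t r : ℕ} (hr : 0 < r) (hmr : m < r * r) (x y : MV m t) :
    colN r x y < r := by
  have hdiv : ∀ (j : Fin (t+1)) (i : Fin (m+1)), pIdx t j i / r < r := by
    intro j i
    exact Nat.div_lt_of_lt_mul (lt_of_le_of_lt (pIdx_le j i) hmr)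
  have hmod : ∀ (j : Fin (t+1)) (i : Fin (m+1)), pIdx t j i % r < r :=
    fun j i => Nat.mod_lt _ hr
  rcases x with ⟨j, i⟩ | u <;> rcases y with ⟨k, b⟩ | u' <;>
    simp only [colN] <;> (try split_ifs) <;> first | exact hr | apply hdiv | apply hmod

/-- The edge coloring. -/
def mcol (m t r : ℕ) (hr : 0 < r) (hmr : m < r * r)
    (e : (genMyc (_root_.starGraph m) t).edgeSet) : Fin r :=
  ⟨Sym2.lift ⟨colN r, colN_symm r⟩ e.val, by
    induction e.val using Sym2.ind with
    | _ x y => rw [Sym2.lift_mk]; exact colN_lt hr hmr x y⟩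

lemma color_pres {m t r : ℕ} (hr : 0 < r) (hmr : m < r * r)
    (φ : genMyc (_root_.starGraph m) t ≃g genMyc (_root_.starGraph m) t)
    (hc : ∀ e, mcol m t r hr hmr (φ.mapEdgeSet e) = mcol m t r hr hmr e)
    {x y : MV m t} (h : (genMyc (_root_.starGraph m) t).Adj x y) :
    colN r (φ x) (φ y) = colN r x y := by
  have h2 := congrArg Fin.val (hc ⟨s(x,y), h⟩)
  simpa [mcol, Iso.mapEdgeSet, Hom.mapEdgeSet, Sym2.map_pair_eq] using h2
lemma star_adj (m : ℕ) (a b : Fin (m+1)) :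
    (_root_.starGraph m).Adj a b ↔ (a = 0 ∧ b ≠ 0) ∨ (a ≠ 0 ∧ b = 0) := by
  simp only [_root_.starGraph, fromRel_adj]
  constructor
  · rintro ⟨hne, h | h⟩ <;> subst h <;> tauto
  · rintro (⟨h0, hb⟩ | ⟨ha, h0⟩) <;> subst h0 <;> exact ⟨by tauto, by tauto⟩

lemma adj_inl_inl (m t : ℕ) (j k : Fin (t+1)) (a b : Fin (m+1)) :
    (genMyc (_root_.starGraph m) t).Adj (Sum.inl (j,a)) (Sum.inl (k,b)) ↔
      ((a = 0 ∧ b ≠ 0) ∨ (a ≠ 0 ∧ b = 0)) ∧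
      ((j.val = 0 ∧ k.val = 0) ∨ k.val = j.val + 1 ∨ j.val = k.val + 1) := by
  simp only [genMyc, fromRel_adj, star_adj, adj_comm]
  constructor
  · rintro ⟨hne, ⟨hl, hs⟩ | ⟨hl, hs⟩⟩
    · exact ⟨hs, by tauto⟩
    · refine ⟨by tauto, by tauto⟩
  · rintro ⟨hs, hl⟩
    refine ⟨?_, ?_⟩
    · rintro h
      injection h with h'
      obtain ⟨h1, h2⟩ := Prod.mk.injEq .. ▸ h'
      rcases hs with ⟨h0, hb⟩ | ⟨ha, h0⟩ <;> simp_all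
    · rcases hl with h | h | h
      · exact Or.inl ⟨Or.inl h, by tauto⟩
      · exact Or.inl ⟨Or.inr h, by tauto⟩
      · exact Or.inr ⟨Or.inr h, by tauto⟩

lemma adj_inl_inr (m t : ℕ) (j : Fin (t+1)) (a : Fin (m+1)) (u : PUnit) :
    (genMyc (_root_.starGraph m) t).Adj (Sum.inl (j,a)) (Sum.inr u) ↔ j.val = t := by
  simp only [genMyc, fromRel_adj]
  constructor
  · rintro ⟨hne, h | h⟩
    · exact h
    · cases h
  · intro h; exact ⟨by simp, Or.inl h⟩

lemma adj_inr_inl (m t : ℕ) (j : Fin (t+1)) (a : Fin (m+1)) (u : PUnit) :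
    (genMyc (_root_.starGraph m) t).Adj (Sum.inr u) (Sum.inl (j,a)) ↔ j.val = t := by
  rw [adj_comm]; exact adj_inl_inr m t j a u

lemma adj_inr_inr (m t : ℕ) (u u' : PUnit) :
    ¬ (genMyc (_root_.starGraph m) t).Adj (Sum.inr u) (Sum.inr u') := by
  rintro ⟨hne, h | h⟩ <;> cases h

/-- `v` has at most two neighbors. -/
def SmallV {V : Type} (G : SimpleGraph V) (v : V) : Prop :=
  ∀ x y z, G.Adj v x → G.Adj v y → G.Adj v z → x = y ∨ x = z ∨ y = z

lemma smallV_map {V : Type} {G : SimpleGraph V} (φ : G ≃g G) {v : V}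
    (h : SmallV G v) : SmallV G (φ v) := by
  intro x y z hx hy hz
  have hx' : G.Adj v (φ.symm x) := by
    simpa using φ.symm.toHom.map_adj hx
  have hy' : G.Adj v (φ.symm y) := by
    simpa using φ.symm.toHom.map_adj hy
  have hz' : G.Adj v (φ.symm z) := by
    simpa using φ.symm.toHom.map_adj hz
  rcases h _ _ _ hx' hy' hz' with h' | h' | h'
  · exact Or.inl (φ.symm.injective h')
  · exact Or.inr (Or.inl (φ.symm.injective h'))
  · exact Or.inr (Or.inr (φ.symm.injective h'))

lemma small_of_two {V : Type} {G : SimpleGraph V} {v : V}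
    (h : ∃ A B, ∀ x, G.Adj v x → x = A ∨ x = B) : SmallV G v := by
  obtain ⟨A, B, h⟩ := h
  intro x y z hx hy hz
  rcases h x hx with rfl | rfl <;> rcases h y hy with rfl | rfl <;>
    rcases h z hz with rfl | rfl <;> tauto

lemma small_leaf {m t : ℕ} (ht : 1 ≤ t) (j : Fin (t+1)) {i : Fin (m+1)} (hi : i ≠ 0) :
    SmallV (genMyc (_root_.starGraph m) t) (Sum.inl (j, i)) := by
  apply small_of_two
  have hjt := j.isLt
  by_cases hj : j.val = t
  · refine ⟨Sum.inr PUnit.unit, Sum.inl (⟨t-1, by omega⟩, 0), ?_⟩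
    rintro (⟨k, b⟩ | u) hadj
    · rw [adj_inl_inl] at hadj
      obtain ⟨hs, hl⟩ := hadj
      have hk := k.isLt
      have hb : b = 0 := by rcases hs with ⟨h1, _⟩ | ⟨_, h2⟩; exacts [absurd h1 hi, h2]
      subst hb
      right; simp only [Sum.inl.injEq, Prod.mk.injEq, Fin.ext_iff]; exact ⟨by omega, trivial⟩
    · left; cases u; rfl
  · by_cases hj0 : j.val = 0
    · refine ⟨Sum.inl (⟨0, by omega⟩, 0), Sum.inl (⟨1, by omega⟩, 0), ?_⟩
      rintro (⟨k, b⟩ | u) hadj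
      · rw [adj_inl_inl] at hadj
        obtain ⟨hs, hl⟩ := hadj
        have hk := k.isLt
        have hb : b = 0 := by rcases hs with ⟨h1, _⟩ | ⟨_, h2⟩; exacts [absurd h1 hi, h2]
        subst hb
        rcases hl with ⟨h1, h2⟩ | h | h
        · left; simp only [Sum.inl.injEq, Prod.mk.injEq, Fin.ext_iff]; exact ⟨by omega, trivial⟩
        · right; simp only [Sum.inl.injEq, Prod.mk.injEq, Fin.ext_iff]; exact ⟨by omega, trivial⟩
        · omega
      · rw [adj_inl_inr] at hadj; omega
    · refine ⟨Sum.inl (⟨j.val-1, by omega⟩, 0), Sum.inl (⟨j.val+1, by omega⟩, 0), ?_⟩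
      rintro (⟨k, b⟩ | u) hadj
      · rw [adj_inl_inl] at hadj
        obtain ⟨hs, hl⟩ := hadj
        have hk := k.isLt
        have hb : b = 0 := by rcases hs with ⟨h1, _⟩ | ⟨_, h2⟩; exacts [absurd h1 hi, h2]
        subst hb
        rcases hl with ⟨h1, h2⟩ | h | h
        · omega
        · right; simp only [Sum.inl.injEq, Prod.mk.injEq, Fin.ext_iff]; exact ⟨by omega, trivial⟩
        · left; simp only [Sum.inl.injEq, Prod.mk.injEq, Fin.ext_iff]; exact ⟨by omega, trivial⟩
      · rw [adj_inl_inr] at hadj; omega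

lemma one_ne_zero_fin {m : ℕ} (hm : 2 ≤ m) : (⟨1, by omega⟩ : Fin (m+1)) ≠ 0 := by
  simp [Fin.ext_iff]

lemma not_small_hub {m t : ℕ} (hm : 2 ≤ m) (ht : 1 ≤ t) (j : Fin (t+1)) :
    ¬ SmallV (genMyc (_root_.starGraph m) t) (Sum.inl (j, 0)) := by
  intro hsm
  have hjt := j.isLt
  have h12 : (⟨1, by omega⟩ : Fin (m+1)) ≠ ⟨2, by omega⟩ := by simp [Fin.ext_iff]
  by_cases hj : j.val = t
  · have h1 : (genMyc (_root_.starGraph m) t).Adj (Sum.inl (j, 0))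
        (Sum.inl (⟨t-1, by omega⟩, ⟨1, by omega⟩)) := by
      rw [adj_inl_inl]
      exact ⟨Or.inl ⟨rfl, by simp [Fin.ext_iff]⟩, by right; right; simp; omega⟩
    have h2 : (genMyc (_root_.starGraph m) t).Adj (Sum.inl (j, 0))
        (Sum.inl (⟨t-1, by omega⟩, ⟨2, by omega⟩)) := by
      rw [adj_inl_inl]
      exact ⟨Or.inl ⟨rfl, by simp [Fin.ext_iff]⟩, by right; right; simp; omega⟩
    have h3 : (genMyc (_root_.starGraph m) t).Adj (Sum.inl (j, 0)) (Sum.inr PUnit.unit) := by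
      rw [adj_inl_inr]; exact hj
    rcases hsm _ _ _ h1 h2 h3 with h | h | h <;> simp_all [Fin.ext_iff]
  · have h1 : (genMyc (_root_.starGraph m) t).Adj (Sum.inl (j, 0))
        (Sum.inl (⟨j.val+1, by omega⟩, ⟨1, by omega⟩)) := by
      rw [adj_inl_inl]
      exact ⟨Or.inl ⟨rfl, by simp [Fin.ext_iff]⟩, by right; left; simp⟩
    have h2 : (genMyc (_root_.starGraph m) t).Adj (Sum.inl (j, 0))
        (Sum.inl (⟨j.val+1, by omega⟩, ⟨2, by omega⟩)) := by
      rw [adj_inl_inl]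
      exact ⟨Or.inl ⟨rfl, by simp [Fin.ext_iff]⟩, by right; left; simp⟩
    have h3 : (genMyc (_root_.starGraph m) t).Adj (Sum.inl (j, 0))
        (Sum.inl (⟨if j.val = 0 then 0 else j.val - 1, by split <;> omega⟩, ⟨1, by omega⟩)) := by
      rw [adj_inl_inl]
      refine ⟨Or.inl ⟨rfl, by simp [Fin.ext_iff]⟩, ?_⟩
      by_cases hj0 : j.val = 0
      · left; simp [hj0]
      · right; right; simp [hj0]; omega
    rcases hsm _ _ _ h1 h2 h3 with h | h | h <;>
      · simp only [Sum.inl.injEq, Prod.mk.injEq, Fin.mk.injEq] at h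
        rcases h with ⟨hA, hB⟩
        (try split_ifs at hA) <;> omega

lemma not_small_root {m t : ℕ} (hm : 2 ≤ m) :
    ¬ SmallV (genMyc (_root_.starGraph m) t) (Sum.inr PUnit.unit) := by
  intro hsm
  have hadj : ∀ a : Fin (m+1), (genMyc (_root_.starGraph m) t).Adj (Sum.inr PUnit.unit)
      (Sum.inl (⟨t, by omega⟩, a)) := by
    intro a; rw [adj_inr_inl]
  rcases hsm _ _ _ (hadj 0) (hadj ⟨1, by omega⟩) (hadj ⟨2, by omega⟩) with h | h | h <;>
    simp_all [Fin.ext_iff]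

lemma big_adj {m t : ℕ} (hm : 2 ≤ m) (ht : 1 ≤ t) {v v' : MV m t}
    (h : (genMyc (_root_.starGraph m) t).Adj v v')
    (hv : ¬ SmallV (genMyc (_root_.starGraph m) t) v)
    (hv' : ¬ SmallV (genMyc (_root_.starGraph m) t) v') :
    (v = Sum.inl (⟨t, by omega⟩, 0) ∧ v' = Sum.inr PUnit.unit) ∨
    (v = Sum.inr PUnit.unit ∧ v' = Sum.inl (⟨t, by omega⟩, 0)) := by
  rcases v with ⟨j, a⟩ | u <;> rcases v' with ⟨k, b⟩ | u'
  · rw [adj_inl_inl] at h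
    rcases h.1 with ⟨_, hb⟩ | ⟨ha, _⟩
    · exact absurd (small_leaf ht k hb) hv'
    · exact absurd (small_leaf ht j ha) hv
  · rw [adj_inl_inr] at h
    rcases eq_or_ne a 0 with rfl | ha
    · left
      cases u'
      exact ⟨by simp only [Sum.inl.injEq, Prod.mk.injEq, Fin.ext_iff]; exact ⟨h, trivial⟩, rfl⟩
    · exact absurd (small_leaf ht j ha) hv
  · rw [adj_inr_inl] at h
    rcases eq_or_ne b 0 with rfl | hb
    · right
      cases u
      exact ⟨rfl, by simp only [Sum.inl.injEq, Prod.mk.injEq, Fin.ext_iff]; exact ⟨h, trivial⟩⟩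
    · exact absurd (small_leaf ht k hb) hv'
  · exact absurd h (adj_inr_inr m t u u')

/-- potential function for distance lower bounds. -/
def fz {m t : ℕ} : MV m t → ℤ
  | Sum.inl (j,_) => (t : ℤ) - j.val + 1
  | Sum.inr _ => 0

lemma fz_lip {m t : ℕ} {x y : MV m t} (h : (genMyc (_root_.starGraph m) t).Adj x y) :
    fz x ≤ fz y + 1 := by
  rcases x with ⟨j, a⟩ | u <;> rcases y with ⟨k, b⟩ | u'
  · rw [adj_inl_inl] at h
    have := j.isLt; have := k.isLt
    simp only [fz]; rcases h.2 with ⟨h1, h2⟩ | h1 | h1 <;> omega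
  · rw [adj_inl_inr] at h
    simp only [fz]; omega
  · rw [adj_inr_inl] at h
    have := k.isLt
    simp only [fz]; omega
  · exact absurd h (adj_inr_inr m t u u')

lemma walk_lower {m t : ℕ} : ∀ {x y : MV m t} (p : (genMyc (_root_.starGraph m) t).Walk x y),
    fz x ≤ fz y + p.length := by
  intro x y p
  induction p with
  | nil => simp
  | cons h p ih =>
    have h1 := fz_lip h
    simp only [SimpleGraph.Walk.length_cons]
    push_cast
    omega

lemma walk_upper {m t : ℕ} (hm : 2 ≤ m) : ∀ (d : ℕ) (j : Fin (t+1)) (a : Fin (m+1)),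
    t - j.val = d → ∃ p : (genMyc (_root_.starGraph m) t).Walk (Sum.inl (j,a)) (Sum.inr PUnit.unit),
      p.length = d + 1 := by
  intro d
  induction d with
  | zero =>
    intro j a hj
    have hjt := j.isLt
    have hadj : (genMyc (_root_.starGraph m) t).Adj (Sum.inl (j,a)) (Sum.inr PUnit.unit) := by
      rw [adj_inl_inr]; omega
    exact ⟨SimpleGraph.Walk.cons hadj SimpleGraph.Walk.nil, rfl⟩
  | succ d ih =>
    intro j a hj
    have hjt := j.isLt
    set b : Fin (m+1) := if a = 0 then ⟨1, by omega⟩ else 0 with hb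
    have hadj : (genMyc (_root_.starGraph m) t).Adj (Sum.inl (j,a))
        (Sum.inl (⟨j.val+1, by omega⟩, b)) := by
      rw [adj_inl_inl]
      refine ⟨?_, by right; left; simp⟩
      by_cases ha : a = 0
      · left; exact ⟨ha, by simp [hb, ha, Fin.ext_iff]⟩
      · right; exact ⟨ha, by simp [hb, ha]⟩
    obtain ⟨p, hp⟩ := ih ⟨j.val+1, by omega⟩ b (by simp; omega)
    exact ⟨SimpleGraph.Walk.cons hadj p, by simp [hp]⟩

lemma reach_root {m t : ℕ} (hm : 2 ≤ m) (x : MV m t) :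
    (genMyc (_root_.starGraph m) t).Reachable x (Sum.inr PUnit.unit) := by
  rcases x with ⟨j, a⟩ | u
  · obtain ⟨p, _⟩ := walk_upper hm (t - j.val) j a rfl
    exact ⟨p⟩
  · cases u; exact SimpleGraph.Reachable.refl _

lemma reach_all {m t : ℕ} (hm : 2 ≤ m) (x y : MV m t) :
    (genMyc (_root_.starGraph m) t).Reachable x y :=
  (reach_root hm x).trans (reach_root hm y).symm

lemma dist_root {m t : ℕ} (hm : 2 ≤ m) (j : Fin (t+1)) (a : Fin (m+1)) :
    (genMyc (_root_.starGraph m) t).dist (Sum.inl (j,a)) (Sum.inr PUnit.unit) = t - j.val + 1 := by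
  have hjt := j.isLt
  obtain ⟨p, hp⟩ := walk_upper hm (t - j.val) j a rfl
  have h1 : (genMyc (_root_.starGraph m) t).dist (Sum.inl (j,a)) (Sum.inr PUnit.unit) ≤ t - j.val + 1 :=
    hp ▸ SimpleGraph.dist_le p
  obtain ⟨q, hq⟩ := (reach_root hm (Sum.inl (j,a))).exists_walk_length_eq_dist
  have h2 := walk_lower q
  simp only [fz] at h2
  omega

lemma iso_dist_le {m t : ℕ} (hm : 2 ≤ m)
    (φ : genMyc (_root_.starGraph m) t ≃g genMyc (_root_.starGraph m) t) (x y : MV m t) :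
    (genMyc (_root_.starGraph m) t).dist (φ x) (φ y) ≤ (genMyc (_root_.starGraph m) t).dist x y := by
  obtain ⟨p, hp⟩ := (reach_all hm x y).exists_walk_length_eq_dist
  calc (genMyc (_root_.starGraph m) t).dist (φ x) (φ y) ≤ (p.map φ.toHom).length :=
        SimpleGraph.dist_le _
    _ = p.length := SimpleGraph.Walk.length_map _ _
    _ = _ := hp

lemma iso_dist_eq {m t : ℕ} (hm : 2 ≤ m)
    (φ : genMyc (_root_.starGraph m) t ≃g genMyc (_root_.starGraph m) t) (x y : MV m t) :
    (genMyc (_root_.starGraph m) t).dist (φ x) (φ y) = (genMyc (_root_.starGraph m) t).dist x y := by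
  refine le_antisymm (iso_dist_le hm φ x y) ?_
  have := iso_dist_le hm φ.symm (φ x) (φ y)
  simpa using this

lemma colN_leaf_up {m t r : ℕ} {j k : Fin (t+1)} {i : Fin (m+1)} (hi : i ≠ 0)
    (hjk : j.val < k.val) :
    colN (m := m) r (Sum.inl (j,i)) (Sum.inl (k, 0)) = pIdx t j i / r := by
  simp [colN, hi, hjk]

lemma colN_leaf_down {m t r : ℕ} {j k : Fin (t+1)} {i : Fin (m+1)} (hi : i ≠ 0)
    (hjk : ¬ j.val < k.val) :
    colN (m := m) r (Sum.inl (j,i)) (Sum.inl (k, 0)) = pIdx t j i % r := by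
  simp [colN, hi, hjk]

lemma colN_leaf_root {m t r : ℕ} {j : Fin (t+1)} {i : Fin (m+1)} (hi : i ≠ 0) (u : PUnit) :
    colN (m := m) r (Sum.inl (j,i)) (Sum.inr u) = pIdx t j i / r := by
  simp [colN, hi]

lemma pIdx_top {m t : ℕ} {j : Fin (t+1)} (hj : j.val = t) (i : Fin (m+1)) :
    pIdx t j i = i.val := by simp [pIdx, hj]

lemma pIdx_low {m t : ℕ} {j : Fin (t+1)} (hj : j.val ≠ t) (i : Fin (m+1)) :
    pIdx t j i = i.val - 1 := by simp [pIdx, hj]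

lemma fin_ne_zero_iff {m : ℕ} (i : Fin (m+1)) : i ≠ 0 ↔ 1 ≤ i.val := by
  rw [Ne, Fin.ext_iff]
  simp [Nat.one_le_iff_ne_zero]

lemma card_fin_filter_Ico {n a b : ℕ} (hbn : b ≤ n) :
    (Finset.univ.filter (fun i : Fin n => a ≤ i.val ∧ i.val < b)).card = b - a := by
  classical
  rw [← Nat.card_Ico a b]
  apply Finset.card_bij (fun i _ => i.val)
  · intro i hi
    simp only [Finset.mem_filter, Finset.mem_univ, true_and] at hi
    simp only [Finset.mem_Ico]
    exact hi
  · intro a1 h1 a2 h2 heq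
    exact Fin.ext heq
  · intro c hc
    simp only [Finset.mem_Ico] at hc
    exact ⟨⟨c, by omega⟩, by simp only [Finset.mem_filter, Finset.mem_univ, true_and]; exact hc,
      rfl⟩

/-- The constructed coloring is distinguishing. -/
lemma main_dist {m t r : ℕ} (hm : 2 ≤ m) (ht : 1 ≤ t) (hr : 0 < r) (hrm : r ≤ m)
    (hmr : m < r * r) (φ : genMyc (_root_.starGraph m) t ≃g genMyc (_root_.starGraph m) t)
    (hc : ∀ e, mcol m t r hr hmr (φ.mapEdgeSet e) = mcol m t r hr hmr e) :
    ∀ v, φ v = v := by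
  classical
  have hcol : ∀ {x y : MV m t}, (genMyc (_root_.starGraph m) t).Adj x y →
      colN r (φ x) (φ y) = colN r x y := fun h => color_pres hr hmr φ hc h
  set tf : Fin (t+1) := ⟨t, by omega⟩ with htf
  set t1f : Fin (t+1) := ⟨t-1, by omega⟩ with ht1f
  set wv : MV m t := Sum.inr PUnit.unit with hwv
  set htop : MV m t := Sum.inl (tf, (0 : Fin (m+1))) with hhtop
  have htfval : tf.val = t := rfl
  have ht1fval : t1f.val = t - 1 := rfl
  have hAdjTop : (genMyc (_root_.starGraph m) t).Adj htop wv := by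
    rw [hhtop, hwv, adj_inl_inr]
  have nsm1 : ¬ SmallV (genMyc (_root_.starGraph m) t) (φ htop) := fun hs =>
    not_small_hub hm ht tf (by have := smallV_map φ.symm hs; simpa [hhtop] using this)
  have nsm2 : ¬ SmallV (genMyc (_root_.starGraph m) t) (φ wv) := fun hs =>
    not_small_root hm (by have := smallV_map φ.symm hs; simpa [hwv] using this)
  have hbig := big_adj hm ht (by simpa using φ.toHom.map_adj hAdjTop) nsm1 nsm2
  -- rule out the swap case
  have hWfix : φ wv = wv ∧ φ htop = htop := by
    rcases hbig with ⟨hT, hW⟩ | ⟨hT1, hW1⟩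
    · exact ⟨hW, hT⟩
    · -- swap case: derive a contradiction by counting colors at the root
      exfalso
      have hT' : φ htop = wv := hT1
      have hW' : φ wv = htop := hW1
      have key : ∀ i : Fin (m+1), i ≠ 0 → ∃ b : Fin (m+1), b ≠ 0 ∧
          φ (Sum.inl (tf, i)) = Sum.inl (t1f, b) ∧ (b.val - 1) / r = i.val / r := by
        intro i hi
        have hadjw : (genMyc (_root_.starGraph m) t).Adj (Sum.inl (tf,i)) wv := by
          rw [hwv, adj_inl_inr]
        have h1 : (genMyc (_root_.starGraph m) t).Adj (φ (Sum.inl (tf,i))) (φ wv) := by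
          simpa using φ.toHom.map_adj hadjw
        rw [hW'] at h1
        rcases hx : φ (Sum.inl (tf,i)) with ⟨k, b⟩ | u
        · rw [hx, hhtop, adj_inl_inl] at h1
          have hk := k.isLt
          have hb : b ≠ 0 := by
            rcases h1.1 with ⟨_, h⟩ | ⟨h, _⟩
            · exact absurd rfl h
            · exact h
          have hkval : k.val = t - 1 := by
            rcases h1.2 with ⟨_, h⟩ | h | h <;> rw [htfval] at h <;> omega
          have hkk : k = t1f := by rw [ht1f]; exact Fin.ext hkval
          subst hkk
          refine ⟨b, hb, rfl, ?_⟩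
          have hce := hcol hadjw
          rw [hx, hW', hhtop, colN_leaf_up hb (by rw [htfval, ht1fval]; omega),
            hwv, colN_leaf_root hi, pIdx_low (by rw [ht1fval]; omega),
            pIdx_top htfval] at hce
          exact hce
        · have hphi : φ (Sum.inl (tf,i)) = φ htop := by
            rw [hx, hT', hwv]
          have h2 := φ.injective hphi
          rw [hhtop] at h2
          injection h2 with h3
          exact absurd (congrArg Prod.snd h3) hi
      have key' : ∀ b : Fin (m+1), b ≠ 0 → ∃ i : Fin (m+1), i ≠ 0 ∧
          φ (Sum.inl (tf, i)) = Sum.inl (t1f, b) ∧ (b.val - 1) / r = i.val / r := by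
        intro b hb
        have hadj : (genMyc (_root_.starGraph m) t).Adj (Sum.inl (t1f, b)) htop := by
          rw [hhtop, adj_inl_inl]
          exact ⟨Or.inr ⟨hb, rfl⟩, by right; left; rw [htfval, ht1fval]; omega⟩
        have h1 : (genMyc (_root_.starGraph m) t).Adj (φ.symm (Sum.inl (t1f, b))) (φ.symm htop) := by
          simpa using φ.symm.toHom.map_adj hadj
        have hsymm : φ.symm htop = wv := by
          apply φ.injective
          simp [hW']
        rw [hsymm] at h1
        rcases hy : φ.symm (Sum.inl (t1f, b)) with ⟨k, c⟩ | u
        · rw [hy, hwv, adj_inl_inr] at h1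
          have hkk : k = tf := by rw [htf]; exact Fin.ext h1
          subst hkk
          have hmap : φ (Sum.inl (tf, c)) = Sum.inl (t1f, b) := by
            rw [← hy]; simp
          have hc0 : c ≠ 0 := by
            intro h
            subst h
            rw [← hhtop, hT'] at hmap
            rw [hwv] at hmap
            exact absurd hmap (by simp)
          refine ⟨c, hc0, hmap, ?_⟩
          have hadjw : (genMyc (_root_.starGraph m) t).Adj (Sum.inl (tf,c)) wv := by
            rw [hwv, adj_inl_inr]
          have hce := hcol hadjw
          rw [hmap, hW', hhtop, colN_leaf_up hb (by rw [htfval, ht1fval]; omega),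
            hwv, colN_leaf_root hc0, pIdx_low (by rw [ht1fval]; omega),
            pIdx_top htfval] at hce
          exact hce
        · rw [hy, hwv] at h1
          exact absurd h1 (adj_inr_inr m t u PUnit.unit)
      have hcards : (Finset.univ.filter (fun i : Fin (m+1) => 1 ≤ i.val ∧ i.val < r)).card =
          (Finset.univ.filter (fun b : Fin (m+1) => 1 ≤ b.val ∧ b.val < r + 1)).card := by
        apply Finset.card_bij (fun i _ => if h : i ≠ 0 then (key i h).choose else 0)
        · intro i hi
          simp only [Finset.mem_filter, Finset.mem_univ, true_and] at hi ⊢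
          have hi0 : i ≠ 0 := (fin_ne_zero_iff i).2 hi.1
          rw [dif_pos hi0]
          obtain ⟨hb0, _, hcoleq⟩ := (key i hi0).choose_spec
          refine ⟨(fin_ne_zero_iff _).1 hb0, ?_⟩
          have hdiv0 : i.val / r = 0 := Nat.div_eq_of_lt hi.2
          have hco2 : ((key i hi0).choose.val - 1) / r = 0 := by rw [hcoleq, hdiv0]
          have hlt : (key i hi0).choose.val - 1 < r := by
            by_contra hcon
            have := (Nat.one_le_div_iff hr).2 (le_of_not_gt hcon)
            omega
          omega
        · intro a1 ha1 a2 ha2 heq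
          simp only [Finset.mem_filter, Finset.mem_univ, true_and] at ha1 ha2
          have h10 : a1 ≠ 0 := (fin_ne_zero_iff a1).2 ha1.1
          have h20 : a2 ≠ 0 := (fin_ne_zero_iff a2).2 ha2.1
          rw [dif_pos h10, dif_pos h20] at heq
          obtain ⟨_, hmap1, _⟩ := (key a1 h10).choose_spec
          obtain ⟨_, hmap2, _⟩ := (key a2 h20).choose_spec
          have : φ (Sum.inl (tf, a1)) = φ (Sum.inl (tf, a2)) := by
            rw [hmap1, hmap2, heq]
          have h4 := φ.injective this
          injection h4 with h5
          exact congrArg Prod.snd h5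
        · intro b hb
          simp only [Finset.mem_filter, Finset.mem_univ, true_and] at hb
          have hb0 : b ≠ 0 := (fin_ne_zero_iff b).2 hb.1
          obtain ⟨i, hi0, hmapi, hcoleq⟩ := key' b hb0
          refine ⟨i, ?_, ?_⟩
          · simp only [Finset.mem_filter, Finset.mem_univ, true_and]
            refine ⟨(fin_ne_zero_iff i).1 hi0, ?_⟩
            have hblt : b.val - 1 < r := by omega
            have hd : (b.val - 1) / r = 0 := Nat.div_eq_of_lt hblt
            rw [hd] at hcoleq
            by_contra hcon
            have := (Nat.one_le_div_iff hr).2 (le_of_not_gt hcon)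
            omega
          · rw [dif_pos hi0]
            obtain ⟨_, hmap', _⟩ := (key i hi0).choose_spec
            have h6 : (Sum.inl (t1f, (key i hi0).choose) : MV m t) = Sum.inl (t1f, b) := by
              rw [← hmap', ← hmapi]
            injection h6 with h7
            exact congrArg Prod.snd h7
      rw [card_fin_filter_Ico (by omega), card_fin_filter_Ico (by omega)] at hcards
      omega
  obtain ⟨hW, hT⟩ := hWfix
  -- every hub is fixed
  have hub_fix : ∀ j : Fin (t+1), φ (Sum.inl (j, (0 : Fin (m+1)))) = Sum.inl (j, 0) := by
    intro j
    have hjt := j.isLt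
    have hd : (genMyc (_root_.starGraph m) t).dist (φ (Sum.inl (j,(0 : Fin (m+1))))) wv
        = t - j.val + 1 := by
      calc (genMyc (_root_.starGraph m) t).dist (φ (Sum.inl (j,(0 : Fin (m+1))))) wv
          = (genMyc (_root_.starGraph m) t).dist (φ (Sum.inl (j,0))) (φ wv) := by rw [hW]
        _ = (genMyc (_root_.starGraph m) t).dist (Sum.inl (j,0)) wv := iso_dist_eq hm φ _ _
        _ = t - j.val + 1 := by rw [hwv]; exact dist_root hm j 0
    rcases hx : φ (Sum.inl (j,(0 : Fin (m+1)))) with ⟨k, b⟩ | u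
    · rw [hx, hwv, dist_root hm k b] at hd
      have hk := k.isLt
      have hkj : k = j := Fin.ext (by omega)
      subst hkj
      have hb : b = 0 := by
        by_contra hb0
        have hsmall : SmallV (genMyc (_root_.starGraph m) t) (Sum.inl (k,b)) := small_leaf ht k hb0
        rw [← hx] at hsmall
        have := smallV_map φ.symm hsmall
        simp only [RelIso.symm_apply_apply] at this
        exact not_small_hub hm ht k (by simpa using this)
      rw [hb]
    · rw [hx] at hd
      cases u
      rw [← hwv, SimpleGraph.dist_self] at hd
      omega
  -- every leaf is fixed
  have leaf_fix : ∀ (j : Fin (t+1)) (i : Fin (m+1)), i ≠ 0 →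
      φ (Sum.inl (j, i)) = Sum.inl (j, i) := by
    intro j i hi
    have hjt := j.isLt
    by_cases hj : j.val = t
    · -- top level leaf
      have hadjw : (genMyc (_root_.starGraph m) t).Adj (Sum.inl (j,i)) wv := by
        rw [hwv, adj_inl_inr]; exact hj
      have h1 : (genMyc (_root_.starGraph m) t).Adj (φ (Sum.inl (j,i))) (φ wv) := by
        simpa using φ.toHom.map_adj hadjw
      rw [hW] at h1
      rcases hx : φ (Sum.inl (j,i)) with ⟨k, c⟩ | u
      · rw [hx, hwv, adj_inl_inr] at h1
        have hkj : k = j := Fin.ext (by omega)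
        subst hkj
        have hc0 : c ≠ 0 := by
          intro h
          subst h
          have : φ (Sum.inl (k, (0:Fin (m+1)))) = φ (Sum.inl (k, i)) := by
            rw [hub_fix k, ← hx]
          have h2 := φ.injective this
          injection h2 with h3
          exact hi (congrArg Prod.snd h3).symm
        -- color of the root edge
        have hce1 := hcol hadjw
        rw [hx, hW, hwv, colN_leaf_root hc0, colN_leaf_root hi,
          pIdx_top hj, pIdx_top hj] at hce1
        -- color of the down edge
        have hadjd : (genMyc (_root_.starGraph m) t).Adj (Sum.inl (k,i)) (Sum.inl (t1f, 0)) := by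
          rw [adj_inl_inl]
          exact ⟨Or.inr ⟨hi, rfl⟩, by right; right; rw [ht1fval]; omega⟩
        have hce2 := hcol hadjd
        rw [hx, hub_fix t1f] at hce2
        rw [colN_leaf_down hc0 (by rw [ht1fval]; omega),
          colN_leaf_down hi (by rw [ht1fval]; omega), pIdx_top hj, pIdx_top hj] at hce2
        have hci : c = i := by
          refine Fin.ext ?_
          rw [← Nat.div_add_mod c.val r, ← Nat.div_add_mod i.val r, hce1, hce2]
        rw [hci]
      · rw [hx, hwv] at h1
        exact absurd h1 (adj_inr_inr m t u PUnit.unit)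
    · -- lower level leaf
      obtain ⟨j1, hj1val⟩ : ∃ j1 : Fin (t+1), j1.val = j.val + 1 :=
        ⟨⟨j.val + 1, by omega⟩, rfl⟩
      obtain ⟨j0, hj0val⟩ : ∃ j0 : Fin (t+1), j0.val = if j.val = 0 then 0 else j.val - 1 :=
        ⟨⟨if j.val = 0 then 0 else j.val - 1, by split <;> omega⟩, rfl⟩
      have hadj1 : (genMyc (_root_.starGraph m) t).Adj (Sum.inl (j,i)) (Sum.inl (j1, 0)) := by
        rw [adj_inl_inl]
        exact ⟨Or.inr ⟨hi, rfl⟩, Or.inr (Or.inl hj1val)⟩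
      have hadjd : (genMyc (_root_.starGraph m) t).Adj (Sum.inl (j,i)) (Sum.inl (j0, 0)) := by
        rw [adj_inl_inl]
        refine ⟨Or.inr ⟨hi, rfl⟩, ?_⟩
        rw [hj0val]
        by_cases h0 : j.val = 0
        · left; simp [h0]
        · right; right; simp [h0]; omega
      have h1 : (genMyc (_root_.starGraph m) t).Adj (φ (Sum.inl (j,i))) (Sum.inl (j1, 0)) := by
        have := by simpa using φ.toHom.map_adj hadj1
        rwa [hub_fix j1] at this
      have h2 : (genMyc (_root_.starGraph m) t).Adj (φ (Sum.inl (j,i))) (Sum.inl (j0, 0)) := by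
        have := by simpa using φ.toHom.map_adj hadjd
        rwa [hub_fix j0] at this
      rcases hx : φ (Sum.inl (j,i)) with ⟨k, c⟩ | u
      · rw [hx, adj_inl_inl] at h1 h2
        have hk := k.isLt
        have hc0 : c ≠ 0 := by
          rcases h1.1 with ⟨_, h⟩ | ⟨h, _⟩
          · exact absurd rfl h
          · exact h
        have hkj : k = j := by
          apply Fin.ext
          have hl1 := h1.2
          have hl2 := h2.2
          rw [hj1val] at hl1
          rw [hj0val] at hl2
          by_cases h0 : j.val = 0 <;> simp only [h0, if_true, if_false] at hl2 <;> omega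
        subst hkj
        have hce1 := hcol hadj1
        rw [hx, hub_fix j1, colN_leaf_up hc0 (by rw [hj1val]; omega),
          colN_leaf_up hi (by rw [hj1val]; omega), pIdx_low hj, pIdx_low hj] at hce1
        have hce2 := hcol hadjd
        have hj0le : ¬ k.val < j0.val := by rw [hj0val]; split <;> omega
        rw [hx, hub_fix j0, colN_leaf_down hc0 hj0le, colN_leaf_down hi hj0le,
          pIdx_low hj, pIdx_low hj] at hce2
        have hi1 : 1 ≤ i.val := (fin_ne_zero_iff i).1 hi
        have hc1 : 1 ≤ c.val := (fin_ne_zero_iff c).1 hc0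
        have hsub : c.val - 1 = i.val - 1 := by
          rw [← Nat.div_add_mod (c.val - 1) r, ← Nat.div_add_mod (i.val - 1) r, hce1, hce2]
        have hci : c = i := Fin.ext (by omega)
        rw [hci]
      · rw [hx, adj_inr_inl] at h2
        rw [hj0val] at h2
        split at h2 <;> omega
  -- conclude
  intro v
  rcases v with ⟨j, a⟩ | u
  · by_cases ha : a = 0
    · subst ha; exact hub_fix j
    · exact leaf_fix j a ha
  · cases u
    rw [← hwv, hW, hwv]

theorem distIndex_genMyc_star_le (m t : ℕ) (hm : 2 ≤ m) (ht : 1 ≤ t) :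
    distIndex (genMyc (_root_.starGraph m) t) ≤ sInf {r : ℕ | m + 1 ≤ r ^ 2} := by
  have hne : {r : ℕ | m + 1 ≤ r ^ 2}.Nonempty := ⟨m+1, by simp only [Set.mem_setOf_eq]; nlinarith⟩
  set r := sInf {r : ℕ | m + 1 ≤ r ^ 2} with hrdef
  have hmem : m + 1 ≤ r ^ 2 := Nat.sInf_mem hne
  have hrm : r ≤ m := Nat.sInf_le (by simp only [Set.mem_setOf_eq]; nlinarith)
  have hr : 0 < r := by
    rcases Nat.eq_zero_or_pos r with h | h
    · rw [h] at hmem; simp at hmem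
    · exact h
  have hmr : m < r * r := by have h2 := hmem; rw [pow_two] at h2; omega
  apply Nat.sInf_le
  exact ⟨mcol m t r hr hmr, fun φ hcc => main_dist hm ht hr hrm hmr φ hcc⟩
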